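/- The pure braid group presentation transformation: the standard pure braid relations (i)–(iv) on generators a_{r,s} (r < s) are equivalent to the relations (a)–(d): (a) a_{r,s} a_{i,j} a_{r,s}^{-1} = a_{i,j} if r<s<i<j or i<r<s<j; (b) a_{r,s}^{-1} a_{s,j} a_{r,s} = (a_{r,j} a_{s,j} a_{r,j}^{-1}) for r<s<j; (c) a_{r,j}^{-1} a_{r,s} a_{r,j} = a_{s,j} a_{r,s} a_{s,j}^{-1} for r<s<j; (d) [a_{i,j}, a_{r,j}^{-1} a_{r,s} a_{r,j}] = 1 for r<i<s<j. In particular, relations (iii) and (iv) of the standard presentation follow from (a), (b), (c), (d), and conversely. -/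

import Mathlib

open scoped commutatorElement

private lemma aux_c {G : Type*} [Group G] (x y z : G)
    (h2 : x⁻¹ * z * x = y * z * y⁻¹) :
    ⁅y, z⁆ = ⁅x⁻¹, y⁻¹⁆ ↔ y⁻¹ * x * y = z * x * z⁻¹ := by
  have hyz : ⁅y, z⁆ = x⁻¹ * (z * x * z⁻¹) := by
    rw [commutatorElement_def, ← h2]; group
  have hxy : ⁅x⁻¹, y⁻¹⁆ = x⁻¹ * (y⁻¹ * x * y) := by
    rw [commutatorElement_def]; group
  rw [hyz, hxy, mul_right_inj, eq_comm]

private lemma aux_d {G : Type*} [Group G] (x y z w : G)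
    (h2 : x⁻¹ * z * x = y * z * y⁻¹) :
    (x⁻¹ * w * x = ⁅y, z⁆ * w * ⁅y, z⁆⁻¹) ↔ ⁅w, z * x * z⁻¹⁆ = 1 := by
  have hyz : ⁅y, z⁆ = x⁻¹ * (z * x * z⁻¹) := by
    rw [commutatorElement_def, ← h2]; group
  set u := z * x * z⁻¹ with hu
  rw [hyz, commutatorElement_eq_one_iff_mul_comm]
  constructor
  · intro h
    rw [show x⁻¹ * u * w * (x⁻¹ * u)⁻¹ = x⁻¹ * (u * w * u⁻¹ * x) by group,
        show x⁻¹ * w * x = x⁻¹ * (w * x) by group] at h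
    have h1 : w * x = u * w * u⁻¹ * x := mul_left_cancel h
    have h2' : w = u * w * u⁻¹ := mul_right_cancel h1
    calc w * u = u * w * u⁻¹ * u := by rw [← h2']
    _ = u * w := by group
  · intro h
    rw [show x⁻¹ * u * w * (x⁻¹ * u)⁻¹ = x⁻¹ * (u * w) * u⁻¹ * x by group, ← h]
    group

/-- Equivalence of the standard pure braid relations (i)–(iv) with the
relations (a)–(d) of Lemma 3.4, for elements `a i j` (`1 ≤ i < j ≤ n`) of an
arbitrary group. -/
theorem stmt_19 {G : Type*} [Group G] (n : ℕ) (a : ℕ → ℕ → G) :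
    -- standard presentation relations (i)-(iv)
    ((∀ r s i j, 1 ≤ r → j ≤ n → 1 ≤ i →
        (r < s ∧ s < i ∧ i < j ∨ i < r ∧ r < s ∧ s < j) →
        (a r s)⁻¹ * a i j * a r s = a i j) ∧
     (∀ r s j, 1 ≤ r → r < s → s < j → j ≤ n →
        (a r s)⁻¹ * a s j * a r s = a r j * a s j * (a r j)⁻¹) ∧
     (∀ r s j, 1 ≤ r → r < s → s < j → j ≤ n →
        ⁅a r j, a s j⁆ = ⁅(a r s)⁻¹, (a r j)⁻¹⁆) ∧
     (∀ r i s j, 1 ≤ r → r < i → i < s → s < j → j ≤ n →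
        (a r s)⁻¹ * a i j * a r s
          = ⁅a r j, a s j⁆ * a i j * ⁅a r j, a s j⁆⁻¹))
    ↔
    -- relations (a)-(d)
    ((∀ r s i j, 1 ≤ r → j ≤ n → 1 ≤ i →
        (r < s ∧ s < i ∧ i < j ∨ i < r ∧ r < s ∧ s < j) →
        (a r s)⁻¹ * a i j * a r s = a i j) ∧
     (∀ r s j, 1 ≤ r → r < s → s < j → j ≤ n →
        (a r s)⁻¹ * a s j * a r s = a r j * a s j * (a r j)⁻¹) ∧
     (∀ r s j, 1 ≤ r → r < s → s < j → j ≤ n →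
        (a r j)⁻¹ * a r s * a r j = a s j * a r s * (a s j)⁻¹) ∧
     (∀ r i s j, 1 ≤ r → r < i → i < s → s < j → j ≤ n →
        ⁅a i j, (a r j)⁻¹ * a r s * a r j⁆ = 1)) := by
  constructor
  · rintro ⟨h1, h2, h3, h4⟩
    refine ⟨h1, h2, ?_, ?_⟩
    · intro r s j hr hrs hsj hjn
      exact (aux_c _ _ _ (h2 r s j hr hrs hsj hjn)).mp (h3 r s j hr hrs hsj hjn)
    · intro r i s j hr hri his hsj hjn
      have hrs : r < s := hri.trans his
      have hc := (aux_c _ _ _ (h2 r s j hr hrs hsj hjn)).mp (h3 r s j hr hrs hsj hjn)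
      rw [hc]
      exact (aux_d _ _ _ _ (h2 r s j hr hrs hsj hjn)).mp (h4 r i s j hr hri his hsj hjn)
  · rintro ⟨h1, h2, h3, h4⟩
    refine ⟨h1, h2, ?_, ?_⟩
    · intro r s j hr hrs hsj hjn
      exact (aux_c _ _ _ (h2 r s j hr hrs hsj hjn)).mpr (h3 r s j hr hrs hsj hjn)
    · intro r i s j hr hri his hsj hjn
      have hrs : r < s := hri.trans his
      have hd := h4 r i s j hr hri his hsj hjn
      rw [h3 r s j hr hrs hsj hjn] at hd
      exact (aux_d _ _ _ _ (h2 r s j hr hrs hsj hjn)).mpr hd
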